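/- Let t ↦ w_t = R g a_t 0 be a geodesic in H connecting two points of ∂H, parametrized so that Δ'(w_t, w_t) is maximal at t = 0. Then the function t ↦ Δ'(w_t, w_t) is strictly increasing on (-∞,0], strictly decreasing on [0,∞), satisfies Δ'(w_{-t}, w_{-t}) = Δ'(w_t, w_t), and e^{-2|t|} Δ'(w_0,w_0) ≤ Δ'(w_t, w_t) ≤ 4 e^{-2|t|} Δ'(w_0,w_0) for all t ∈ R. -/

import Mathlib

open Complex Matrix Filter BigOperators

noncomputable section

/-- The signature matrix of the hermitian form of signature `(N,1)` on `ℂ^{N+1}`. -/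
def Jform (N : ℕ) : Matrix (Fin (N + 1)) (Fin (N + 1)) ℂ :=
  Matrix.diagonal fun i => if i = Fin.last N then -1 else 1

/-- Membership in `SU(N,1)`. -/
def inSU (N : ℕ) (g : Matrix (Fin (N + 1)) (Fin (N + 1)) ℂ) : Prop :=
  gᴴ * Jform N * g = Jform N ∧ g.det = 1

/-- The denominator `c z + d` of the Möbius transformation. -/
def denom {N : ℕ} (g : Matrix (Fin (N + 1)) (Fin (N + 1)) ℂ) (z : Fin N → ℂ) : ℂ :=
  g.mulVec (Fin.snoc z 1) (Fin.last N)

/-- The Möbius action `g·z = (Az + b)(cz + d)⁻¹` on the ball in `ℂ^N`. -/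
def act {N : ℕ} (g : Matrix (Fin (N + 1)) (Fin (N + 1)) ℂ) (z : Fin N → ℂ) :
    Fin N → ℂ :=
  fun i => g.mulVec (Fin.snoc z 1) i.castSucc / denom g z

/-- The one-parameter hyperbolic subgroup element `a_t`. -/
def amat (N : ℕ) (t : ℝ) : Matrix (Fin (N + 1)) (Fin (N + 1)) ℂ :=
  Matrix.of fun i j =>
    if i = 0 ∧ j = 0 then (Real.cosh t : ℂ)
    else if i = 0 ∧ j = Fin.last N then (Real.sinh t : ℂ)
    else if i = Fin.last N ∧ j = 0 then (Real.sinh t : ℂ)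
    else if i = Fin.last N ∧ j = Fin.last N then (Real.cosh t : ℂ)
    else if i = j then 1 else 0

/-- The partial Cayley transform `z ↦ ((1+z₁)/(1-z₁), √2 z₂/(1-z₁))` from the ball
in `ℂ^{n+1}` to the unbounded domain `H`. -/
def cayley {n : ℕ} (z : Fin (n + 1) → ℂ) : Fin (n + 1) → ℂ :=
  fun i => if i = 0 then (1 + z 0) / (1 - z 0)
    else (Real.sqrt 2 : ℂ) * z i / (1 - z 0)

/-- The sesqui-polynomial `Δ'(z,w) = z₁ + conj w₁ - w₂* z₂` on
`H ⊆ ℂ^{n+1}` (first coordinate distinguished). -/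
def DeltaP {n : ℕ} (z w : Fin (n + 1) → ℂ) : ℂ :=
  z 0 + (starRingEnd ℂ) (w 0) - ∑ i : Fin n, (starRingEnd ℂ) (w i.succ) * z i.succ

/-- The geodesic `t ↦ R g a_t 0` of the unbounded domain `H ⊆ ℂ^{n+1}`. -/
def geo (n : ℕ) (g : Matrix (Fin (n + 2)) (Fin (n + 2)) ℂ) (t : ℝ) :
    Fin (n + 1) → ℂ :=
  cayley (act (g * amat (n + 1) t) fun _ => 0)

/-! ### Auxiliary material -/

/-- The homogeneous coordinate vector of the geodesic. -/
def vcol (n : ℕ) (g : Matrix (Fin (n + 2)) (Fin (n + 2)) ℂ) (t : ℝ)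
    (k : Fin (n + 2)) : ℂ :=
  (Real.sinh t : ℂ) * g k 0 + (Real.cosh t : ℂ) * g k (Fin.last (n + 1))

/-- The diagonal of the signature form, as a vector. -/
def dfun (n : ℕ) : Fin (n + 2) → ℂ := fun k => if k = Fin.last (n + 1) then -1 else 1

lemma last_ne_zero' (n : ℕ) : (Fin.last (n + 1) : Fin (n + 2)) ≠ 0 := by
  simp [Fin.ext_iff]

lemma geo_eq (n : ℕ) (g : Matrix (Fin (n + 2)) (Fin (n + 2)) ℂ) (t : ℝ) :
    geo n g t = cayley (fun i =>
      vcol n g t i.castSucc / vcol n g t (Fin.last (n + 1))) := by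
  have key : (g * amat (n + 1) t).mulVec (Fin.snoc (fun _ => (0:ℂ)) 1) = vcol n g t := by
    funext i
    have h1 : ∀ M : Matrix (Fin (n+2)) (Fin (n+2)) ℂ,
        M.mulVec (Fin.snoc (fun _ => (0:ℂ)) 1) i = M i (Fin.last (n+1)) := by
      intro M
      rw [Matrix.mulVec, dotProduct, Fin.sum_univ_castSucc]
      simp
    rw [h1, Matrix.mul_apply]
    have h2 : ∀ k : Fin (n+2), amat (n+1) t k (Fin.last (n+1)) =
        (Real.sinh t : ℂ) * (if k = 0 then 1 else 0)
        + (Real.cosh t : ℂ) * (if k = Fin.last (n+1) then 1 else 0) := by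
      intro k
      by_cases hk0 : k = 0
      · simp [amat, hk0, (last_ne_zero' n).symm, last_ne_zero' n]
      · by_cases hkL : k = Fin.last (n+1)
        · simp [amat, hk0, hkL, last_ne_zero' n]
        · simp [amat, hk0, hkL]
    calc (∑ k, g i k * amat (n+1) t k (Fin.last (n+1)))
        = ∑ k, (g i k * (if k = 0 then (Real.sinh t:ℂ) else 0)
            + g i k * (if k = Fin.last (n+1) then (Real.cosh t:ℂ) else 0)) := by
          refine Finset.sum_congr rfl fun k _ => ?_
          rw [h2]
          by_cases hk0 : k = 0 <;> by_cases hkL : k = Fin.last (n+1) <;>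
            simp [hk0, hkL]
      _ = vcol n g t i := by
          rw [Finset.sum_add_distrib]
          simp [Finset.sum_ite_eq' Finset.univ, vcol]
          ring
  unfold geo act denom
  rw [key]

/-- The main formula for `DeltaP` of two cayley-transformed projectivized vectors. -/
lemma deltaP_formula {n : ℕ} (V W : Fin (n + 2) → ℂ)
    (hV : V (Fin.last (n+1)) ≠ 0) (hW : W (Fin.last (n+1)) ≠ 0)
    (hV0 : V 0 ≠ V (Fin.last (n+1))) (hW0 : W 0 ≠ W (Fin.last (n+1))) :
    DeltaP (cayley fun i => V i.castSucc / V (Fin.last (n+1)))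
        (cayley fun i => W i.castSucc / W (Fin.last (n+1))) =
      2 * ((starRingEnd ℂ) (W (Fin.last (n+1))) * V (Fin.last (n+1))
          - ∑ k : Fin (n+1), (starRingEnd ℂ) (W k.castSucc) * V k.castSucc) /
        ((V (Fin.last (n+1)) - V 0) * (starRingEnd ℂ) (W (Fin.last (n+1)) - W 0)) := by
  set L : Fin (n+2) := Fin.last (n+1) with hL
  have hVd : V L - V 0 ≠ 0 := sub_ne_zero.2 (Ne.symm hV0)
  have hWd : W L - W 0 ≠ 0 := sub_ne_zero.2 (Ne.symm hW0)
  have hWdc : (starRingEnd ℂ) (W L - W 0) ≠ 0 := by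
    rw [ne_eq, starRingEnd_apply, star_eq_zero]; exact hWd
  have hsq : (Real.sqrt 2 : ℂ) * (Real.sqrt 2 : ℂ) = 2 := by
    norm_cast
    rw [Real.mul_self_sqrt (by norm_num : (0:ℝ) ≤ 2)]
  have hc0 : (Fin.castSucc (0 : Fin (n+1)) : Fin (n+2)) = 0 := rfl
  have e1 : ∀ (U : Fin (n+2) → ℂ), U L ≠ 0 → U L - U 0 ≠ 0 →
      cayley (fun i => U i.castSucc / U L) 0 = (U L + U 0) / (U L - U 0) := by
    intro U hU hUd
    simp only [cayley, if_true, eq_self_iff_true, hc0]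
    field_simp
  have e1' : ∀ (U : Fin (n+2) → ℂ), U L ≠ 0 → U L - U 0 ≠ 0 → ∀ j : Fin (n+1), j ≠ 0 →
      cayley (fun i => U i.castSucc / U L) j
        = (Real.sqrt 2 : ℂ) * U j.castSucc / (U L - U 0) := by
    intro U hU hUd j hj
    simp only [cayley, if_neg hj, hc0]
    field_simp
  have e2 : ∀ i : Fin n,
      (starRingEnd ℂ) (cayley (fun i => W i.castSucc / W L) i.succ) *
        cayley (fun i => V i.castSucc / V L) i.succ
      = 2 * ((starRingEnd ℂ) (W (Fin.castSucc i.succ)) * V (Fin.castSucc i.succ)) /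
          ((V L - V 0) * (starRingEnd ℂ) (W L - W 0)) := by
    intro i
    rw [e1' V hV hVd _ (Fin.succ_ne_zero i), e1' W hW hWd _ (Fin.succ_ne_zero i)]
    rw [map_div₀, _root_.map_mul, Complex.conj_ofReal, div_mul_div_comm]
    rw [show (Real.sqrt 2 : ℂ) * (starRingEnd ℂ) (W (Fin.castSucc i.succ)) *
        ((Real.sqrt 2 : ℂ) * V (Fin.castSucc i.succ))
        = 2 * ((starRingEnd ℂ) (W (Fin.castSucc i.succ)) * V (Fin.castSucc i.succ)) by
      rw [← hsq]; ring]
    rw [mul_comm ((starRingEnd ℂ) (W L - W 0)) (V L - V 0)]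
  have e3 : ∑ i : Fin n, (starRingEnd ℂ) (cayley (fun i => W i.castSucc / W L) i.succ) *
        cayley (fun i => V i.castSucc / V L) i.succ
      = 2 * (∑ i : Fin n, (starRingEnd ℂ) (W (Fin.castSucc i.succ)) * V (Fin.castSucc i.succ)) /
          ((V L - V 0) * (starRingEnd ℂ) (W L - W 0)) := by
    rw [Finset.sum_congr rfl (fun i _ => e2 i), ← Finset.sum_div, ← Finset.mul_sum]
  unfold DeltaP
  rw [e1 V hV hVd, e1 W hW hWd, e3, map_div₀, _root_.map_add]
  rw [Fin.sum_univ_succ (fun k : Fin (n+1) => (starRingEnd ℂ) (W k.castSucc) * V k.castSucc)]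
  simp only [hc0]
  rw [map_sub]
  rw [map_sub] at hWdc
  field_simp
  ring

/-- The diagonal case of the formula (real-valued, with junk conventions handled). -/
lemma deltaP_diag {n : ℕ} (V : Fin (n + 2) → ℂ) (hV : V (Fin.last (n+1)) ≠ 0) :
    DeltaP (cayley fun i => V i.castSucc / V (Fin.last (n+1)))
        (cayley fun i => V i.castSucc / V (Fin.last (n+1))) =
      (((2 * (normSq (V (Fin.last (n+1))) - ∑ k : Fin (n+1), normSq (V k.castSucc))) /
        normSq (V (Fin.last (n+1)) - V 0) : ℝ) : ℂ) := by
  set L : Fin (n+2) := Fin.last (n+1) with hL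
  have hc0 : (Fin.castSucc (0 : Fin (n+1)) : Fin (n+2)) = 0 := rfl
  by_cases hV0 : V 0 = V L
  · have hz : (cayley fun i => V i.castSucc / V L) = fun _ => (0:ℂ) := by
      funext j
      have h1 : (1:ℂ) - V 0 / V L = 0 := by
        rw [hV0, div_self hV]; ring
      by_cases hj : j = 0
      · simp only [cayley, hj, if_pos, Fin.castSucc_zero]
        rw [h1, div_zero]
      · simp only [cayley, if_neg hj, Fin.castSucc_zero]
        rw [h1, div_zero]
    rw [hz]
    have h2 : normSq (V L - V 0) = 0 := by rw [hV0]; simp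
    rw [h2]
    simp [DeltaP]
  · rw [deltaP_formula V V hV hV hV0 hV0]
    have h1 : (starRingEnd ℂ) (V L) * V L = ((normSq (V L) : ℝ) : ℂ) := by
      rw [mul_comm, Complex.mul_conj]
    have h2 : ∀ k : Fin (n+1), (starRingEnd ℂ) (V k.castSucc) * V k.castSucc
        = ((normSq (V k.castSucc) : ℝ) : ℂ) := fun k => by rw [mul_comm, Complex.mul_conj]
    have h3 : (V L - V 0) * (starRingEnd ℂ) (V L - V 0) = ((normSq (V L - V 0) : ℝ) : ℂ) :=
      Complex.mul_conj _
    rw [h1, Finset.sum_congr rfl (fun k _ => h2 k), h3, ← Complex.ofReal_sum]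
    push_cast
    ring

/-- Cauchy–Schwarz: `Re Δ'(z,w) ≥ 0` for `z, w` in the closure of `H`. -/
lemma deltaP_re_nonneg {m : ℕ} (z w : Fin (m + 1) → ℂ)
    (hz : 0 ≤ (DeltaP z z).re) (hw : 0 ≤ (DeltaP w w).re) :
    0 ≤ (DeltaP z w).re := by
  have hre : ∀ u v : Fin (m+1) → ℂ, (DeltaP u v).re =
      (u 0).re + (v 0).re - (∑ i : Fin m, (starRingEnd ℂ) (v i.succ) * u i.succ).re := by
    intro u v
    simp [DeltaP]
  set x : EuclideanSpace ℂ (Fin m) := WithLp.toLp 2 (fun i => w i.succ) with hx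
  set y : EuclideanSpace ℂ (Fin m) := WithLp.toLp 2 (fun i => z i.succ) with hy
  have hinner : (inner ℂ x y : ℂ) = ∑ i : Fin m, (starRingEnd ℂ) (w i.succ) * z i.succ := by
    simp [x, y, PiLp.inner_apply, mul_comm]
  have hzz : ∑ i : Fin m, normSq (z i.succ) ≤ 2 * (z 0).re := by
    have := hz
    rw [hre] at this
    have hsum : (∑ i : Fin m, (starRingEnd ℂ) (z i.succ) * z i.succ).re
        = ∑ i : Fin m, normSq (z i.succ) := by
      rw [Finset.sum_congr rfl (fun k _ => by rw [mul_comm, Complex.mul_conj]),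
        ← Complex.ofReal_sum]
      simp
    rw [hsum] at this
    linarith
  have hww : ∑ i : Fin m, normSq (w i.succ) ≤ 2 * (w 0).re := by
    have := hw
    rw [hre] at this
    have hsum : (∑ i : Fin m, (starRingEnd ℂ) (w i.succ) * w i.succ).re
        = ∑ i : Fin m, normSq (w i.succ) := by
      rw [Finset.sum_congr rfl (fun k _ => by rw [mul_comm, Complex.mul_conj]),
        ← Complex.ofReal_sum]
      simp
    rw [hsum] at this
    linarith
  have hnx : ‖x‖ ^ 2 = ∑ i : Fin m, normSq (w i.succ) := by
    rw [EuclideanSpace.norm_eq]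
    rw [Real.sq_sqrt (by positivity)]
    exact Finset.sum_congr rfl fun i _ => by
      simp [x, Complex.sq_norm]
  have hny : ‖y‖ ^ 2 = ∑ i : Fin m, normSq (z i.succ) := by
    rw [EuclideanSpace.norm_eq]
    rw [Real.sq_sqrt (by positivity)]
    exact Finset.sum_congr rfl fun i _ => by
      simp [y, Complex.sq_norm]
  have hCS : (∑ i : Fin m, (starRingEnd ℂ) (w i.succ) * z i.succ).re ≤ ‖x‖ * ‖y‖ := by
    rw [← hinner]
    calc (inner ℂ x y : ℂ).re ≤ ‖(inner ℂ x y : ℂ)‖ := Complex.re_le_norm _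
      _ ≤ ‖x‖ * ‖y‖ := norm_inner_le_norm x y
  rw [hre]
  nlinarith [sq_nonneg (‖x‖ - ‖y‖), norm_nonneg x, norm_nonneg y]

/-- Splitting a signature-form sum into spatial and last parts. -/
lemma sum_d_split (n : ℕ) (u w : Fin (n + 2) → ℂ) :
    ∑ k, dfun n k * (starRingEnd ℂ) (u k) * w k
      = (∑ k : Fin (n+1), (starRingEnd ℂ) (u k.castSucc) * w k.castSucc)
        - (starRingEnd ℂ) (u (Fin.last (n+1))) * w (Fin.last (n+1)) := by
  rw [Fin.sum_univ_castSucc]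
  have h1 : ∀ k : Fin (n+1), dfun n k.castSucc = 1 := by
    intro k
    simp [dfun, Fin.castSucc_lt_last k |>.ne]
  have h2 : dfun n (Fin.last (n+1)) = -1 := by simp [dfun]
  rw [Finset.sum_congr rfl (fun k _ => by rw [h1 k, one_mul]), h2]
  ring

/-- Expansion of the signature form on linear combinations of the two relevant
columns of `g`. -/
lemma sum_bilin (n : ℕ) (b c : Fin (n + 2) → ℂ)
    (hbb : ∑ k, dfun n k * (starRingEnd ℂ) (b k) * b k = 1)
    (hcc : ∑ k, dfun n k * (starRingEnd ℂ) (c k) * c k = -1)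
    (hbc : ∑ k, dfun n k * (starRingEnd ℂ) (b k) * c k = 0)
    (hcb : ∑ k, dfun n k * (starRingEnd ℂ) (c k) * b k = 0)
    (s1 c1 s2 c2 : ℂ) :
    ∑ k, dfun n k * (starRingEnd ℂ) (s1 * b k + c1 * c k) * (s2 * b k + c2 * c k)
      = (starRingEnd ℂ) s1 * s2 - (starRingEnd ℂ) c1 * c2 := by
  have hpt : ∀ k, dfun n k * (starRingEnd ℂ) (s1 * b k + c1 * c k) * (s2 * b k + c2 * c k)
      = (starRingEnd ℂ) s1 * s2 * (dfun n k * (starRingEnd ℂ) (b k) * b k)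
      + (starRingEnd ℂ) s1 * c2 * (dfun n k * (starRingEnd ℂ) (b k) * c k)
      + (starRingEnd ℂ) c1 * s2 * (dfun n k * (starRingEnd ℂ) (c k) * b k)
      + (starRingEnd ℂ) c1 * c2 * (dfun n k * (starRingEnd ℂ) (c k) * c k) := by
    intro k
    rw [_root_.map_add, _root_.map_mul, _root_.map_mul]
    ring
  rw [Finset.sum_congr rfl fun k _ => hpt k]
  rw [Finset.sum_add_distrib, Finset.sum_add_distrib, Finset.sum_add_distrib,
    ← Finset.mul_sum, ← Finset.mul_sum, ← Finset.mul_sum, ← Finset.mul_sum,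
    hbb, hbc, hcb, hcc]
  ring


set_option maxHeartbeats 4000000 in
/-- Let `t ↦ w_t = R g a_t 0` be a geodesic of `H` connecting two
points of `∂H`, parametrized so that `Δ'(w_t, w_t)` is maximal at `t = 0`. Then
`t ↦ Δ'(w_t, w_t)` is strictly increasing on `(-∞,0]`, strictly decreasing on
`[0,∞)`, satisfies `Δ'(w_{-t}, w_{-t}) = Δ'(w_t, w_t)` and
`e^{-2|t|} Δ'(w₀,w₀) ≤ Δ'(w_t,w_t) ≤ 4 e^{-2|t|} Δ'(w₀,w₀)` for all `t`. -/
theorem stmt12 (n : ℕ) (g : Matrix (Fin (n + 2)) (Fin (n + 2)) ℂ)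
    (hg : inSU (n + 1) g)
    (hp : ∃ p : Fin (n + 1) → ℂ, Tendsto (geo n g) atTop (nhds p) ∧ DeltaP p p = 0)
    (hq : ∃ q : Fin (n + 1) → ℂ, Tendsto (geo n g) atBot (nhds q) ∧ DeltaP q q = 0)
    (hmax : ∀ t : ℝ, (DeltaP (geo n g t) (geo n g t)).re ≤
      (DeltaP (geo n g 0) (geo n g 0)).re) :
    StrictMonoOn (fun t : ℝ => (DeltaP (geo n g t) (geo n g t)).re) (Set.Iic 0) ∧
    StrictAntiOn (fun t : ℝ => (DeltaP (geo n g t) (geo n g t)).re) (Set.Ici 0) ∧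
    (∀ t : ℝ, DeltaP (geo n g (-t)) (geo n g (-t)) =
      DeltaP (geo n g t) (geo n g t)) ∧
    (∀ t : ℝ,
      Real.exp (-(2 * |t|)) * (DeltaP (geo n g 0) (geo n g 0)).re ≤
        (DeltaP (geo n g t) (geo n g t)).re ∧
      (DeltaP (geo n g t) (geo n g t)).re ≤
        4 * Real.exp (-(2 * |t|)) * (DeltaP (geo n g 0) (geo n g 0)).re) := by
  obtain ⟨p, hptend, hpz⟩ := hp
  obtain ⟨q, hqtend, hqz⟩ := hq
  -- the two relevant columns of g
  have hrel : ∀ i j : Fin (n+2), ∑ k, dfun n k * (starRingEnd ℂ) (g k i) * g k j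
      = if i = j then dfun n i else 0 := by
    intro i j
    have h := congrFun (congrFun hg.1 i) j
    rw [Matrix.mul_apply] at h
    simp only [Jform, Matrix.mul_diagonal, Matrix.conjTranspose_apply,
      Matrix.diagonal_apply] at h
    simp only [dfun]
    rw [← h]
    refine Finset.sum_congr rfl fun k _ => ?_
    simp only [Complex.star_def]
    ring
  have h0L : (0 : Fin (n+2)) ≠ Fin.last (n+1) := (last_ne_zero' n).symm
  set b : Fin (n+2) → ℂ := fun k => g k 0 with hbdef
  set c : Fin (n+2) → ℂ := fun k => g k (Fin.last (n+1)) with hcdef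
  have hbb : ∑ k, dfun n k * (starRingEnd ℂ) (b k) * b k = 1 := by
    have := hrel 0 0
    simpa [dfun, h0L.symm] using this
  have hcc : ∑ k, dfun n k * (starRingEnd ℂ) (c k) * c k = -1 := by
    have := hrel (Fin.last (n+1)) (Fin.last (n+1))
    simpa [dfun] using this
  have hbc : ∑ k, dfun n k * (starRingEnd ℂ) (b k) * c k = 0 := by
    have := hrel 0 (Fin.last (n+1))
    simpa [dfun, h0L] using this
  have hcb : ∑ k, dfun n k * (starRingEnd ℂ) (c k) * b k = 0 := by
    have := hrel (Fin.last (n+1)) 0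
    simpa [dfun, h0L.symm] using this
  have hSB := sum_bilin n b c hbb hcc hbc hcb
  -- the homogeneous coordinate vector
  set v : ℝ → Fin (n+2) → ℂ :=
    fun t k => (Real.sinh t : ℂ) * b k + (Real.cosh t : ℂ) * c k with hvdef
  have hvcol : ∀ t, vcol n g t = v t := fun t => rfl
  have hvv : ∀ t : ℝ, ∑ k, dfun n k * (starRingEnd ℂ) (v t k) * v t k = -1 := by
    intro t
    have h : ∑ k, dfun n k * (starRingEnd ℂ) (v t k) * v t k
        = (starRingEnd ℂ) ((Real.sinh t : ℝ) : ℂ) * ((Real.sinh t : ℝ) : ℂ)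
          - (starRingEnd ℂ) ((Real.cosh t : ℝ) : ℂ) * ((Real.cosh t : ℝ) : ℂ) :=
      hSB _ _ _ _
    rw [h, Complex.conj_ofReal, Complex.conj_ofReal]
    have hid := Real.cosh_sq_sub_sinh_sq t
    have : ((Real.sinh t : ℝ) : ℂ) * ((Real.sinh t : ℝ) : ℂ)
        - ((Real.cosh t : ℝ) : ℂ) * ((Real.cosh t : ℝ) : ℂ)
        = ((Real.sinh t ^ 2 - Real.cosh t ^ 2 : ℝ) : ℂ) := by push_cast; ring
    rw [this, show Real.sinh t ^ 2 - Real.cosh t ^ 2 = -1 by nlinarith [hid]]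
    norm_num
  have hmix : ∀ t : ℝ, ∑ k, dfun n k * (starRingEnd ℂ) (v (-t) k) * v t k
      = ((- Real.cosh (2*t) : ℝ) : ℂ) := by
    intro t
    have h : ∑ k, dfun n k * (starRingEnd ℂ) (v (-t) k) * v t k
        = (starRingEnd ℂ) ((Real.sinh (-t) : ℝ) : ℂ) * ((Real.sinh t : ℝ) : ℂ)
          - (starRingEnd ℂ) ((Real.cosh (-t) : ℝ) : ℂ) * ((Real.cosh t : ℝ) : ℂ) :=
      hSB _ _ _ _
    rw [h, Complex.conj_ofReal, Complex.conj_ofReal, Real.sinh_neg, Real.cosh_neg]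
    have hch : Real.cosh (2*t) = Real.cosh t * Real.cosh t + Real.sinh t * Real.sinh t := by
      rw [two_mul, Real.cosh_add]
    rw [hch]
    push_cast
    ring
  -- the norm relation : |v_L|² = 1 + Σ |v_i|²
  have hnorm : ∀ t : ℝ, normSq (v t (Fin.last (n+1)))
      = 1 + ∑ k : Fin (n+1), normSq (v t k.castSucc) := by
    intro t
    have h := hvv t
    rw [sum_d_split n (v t) (v t)] at h
    have h2 : ∀ k : Fin (n+1), (starRingEnd ℂ) (v t k.castSucc) * v t k.castSucc
        = ((normSq (v t k.castSucc) : ℝ) : ℂ) := fun k => by rw [mul_comm, Complex.mul_conj]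
    have h3 : (starRingEnd ℂ) (v t (Fin.last (n+1))) * v t (Fin.last (n+1))
        = ((normSq (v t (Fin.last (n+1))) : ℝ) : ℂ) := by
      rw [mul_comm, Complex.mul_conj]
    rw [Finset.sum_congr rfl (fun k _ => h2 k), h3, ← Complex.ofReal_sum] at h
    have h4 : (((∑ k : Fin (n+1), normSq (v t k.castSucc))
        - normSq (v t (Fin.last (n+1))) : ℝ) : ℂ) = ((-1 : ℝ) : ℂ) := by
      push_cast
      rw [← h]
      push_cast
      ring
    have h5 := Complex.ofReal_injective h4
    linarith
  have hvL : ∀ t : ℝ, v t (Fin.last (n+1)) ≠ 0 := by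
    intro t hzero
    have h := hnorm t
    rw [hzero] at h
    simp only [map_zero] at h
    have : (0:ℝ) ≤ ∑ k : Fin (n+1), normSq (v t k.castSucc) :=
      Finset.sum_nonneg fun k _ => normSq_nonneg _
    linarith
  -- P, Q, A, B, C and f
  set P : ℂ := ((b (Fin.last (n+1)) - b 0) + (c (Fin.last (n+1)) - c 0)) / 2 with hPdef
  set Q : ℂ := ((c (Fin.last (n+1)) - c 0) - (b (Fin.last (n+1)) - b 0)) / 2 with hQdef
  set A : ℝ := normSq P with hAdef
  set B : ℝ := normSq Q with hBdef
  set CC : ℝ := 2 * (P * (starRingEnd ℂ) Q).re with hCdef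
  set f : ℝ → ℝ := fun t => A * Real.exp (2*t) + B * Real.exp (-(2*t)) + CC with hfdef
  have hfeq : ∀ t, f t = A * Real.exp (2*t) + B * Real.exp (-(2*t)) + CC := fun t => rfl
  have hvPQ : ∀ t : ℝ, v t (Fin.last (n+1)) - v t 0
      = ((Real.exp t : ℝ) : ℂ) * P + ((Real.exp (-t) : ℝ) : ℂ) * Q := by
    intro t
    show ((Real.sinh t : ℂ) * b (Fin.last (n+1)) + (Real.cosh t : ℂ) * c (Fin.last (n+1)))
        - ((Real.sinh t : ℂ) * b 0 + (Real.cosh t : ℂ) * c 0) = _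
    rw [hPdef, hQdef, Real.sinh_eq, Real.cosh_eq]
    push_cast
    ring
  have hexp1 : ∀ t : ℝ, Real.exp t * Real.exp (-t) = 1 := by
    intro t; rw [← Real.exp_add]; simp
  have hexp2 : ∀ t : ℝ, Real.exp t * Real.exp t = Real.exp (2*t) := by
    intro t; rw [← Real.exp_add, two_mul]
  have hexp2' : ∀ t : ℝ, Real.exp (-t) * Real.exp (-t) = Real.exp (-(2*t)) := by
    intro t; rw [← Real.exp_add]; ring_nf
  have hfval : ∀ t : ℝ, normSq (v t (Fin.last (n+1)) - v t 0) = f t := by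
    intro t
    rw [hvPQ t, Complex.normSq_add, Complex.normSq_mul, Complex.normSq_mul,
      Complex.normSq_ofReal, Complex.normSq_ofReal]
    have hc : ((Real.exp t : ℝ):ℂ) * P * (starRingEnd ℂ) (((Real.exp (-t) : ℝ):ℂ) * Q)
        = ((Real.exp t * Real.exp (-t) : ℝ) : ℂ) * (P * (starRingEnd ℂ) Q) := by
      rw [_root_.map_mul, Complex.conj_ofReal]; push_cast; ring
    rw [hc, hexp1 t, hfeq t, ← hAdef, ← hBdef]
    simp only [Complex.ofReal_one, one_mul]
    rw [← hexp2 t, ← hexp2' t, hCdef]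
    ring
  -- main formula : Re Δ'(w_t, w_t) = 2 / f t
  have hF : ∀ t : ℝ, (DeltaP (geo n g t) (geo n g t)).re = 2 / f t := by
    intro t
    rw [geo_eq n g t, hvcol t, deltaP_diag (v t) (hvL t), Complex.ofReal_re, hfval t]
    have h := hnorm t
    rw [show normSq (v t (Fin.last (n+1)))
      - ∑ k : Fin (n+1), normSq (v t k.castSucc) = 1 by linarith]
    norm_num
  have him : ∀ t : ℝ, (DeltaP (geo n g t) (geo n g t)).im = 0 := by
    intro t
    rw [geo_eq n g t, hvcol t, deltaP_diag (v t) (hvL t), Complex.ofReal_im]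
  have hfnn : ∀ t : ℝ, 0 ≤ f t := fun t => (hfval t) ▸ normSq_nonneg _
  have hAnn : 0 ≤ A := normSq_nonneg _
  have hBnn : 0 ≤ B := normSq_nonneg _
  -- limits at ±∞
  have hcont : Continuous fun z : Fin (n+1) → ℂ => (DeltaP z z).re := by
    apply Complex.continuous_re.comp
    unfold DeltaP
    exact ((continuous_apply (0 : Fin (n+1))).add
      (Complex.continuous_conj.comp (continuous_apply (0 : Fin (n+1))))).sub
      (continuous_finset_sum _ fun i _ =>
        ((Complex.continuous_conj.comp (continuous_apply _)).mul (continuous_apply _)))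
  have hlimtop : Tendsto (fun t => 2 / f t) atTop (nhds 0) := by
    have h1 : Tendsto (fun t => (DeltaP (geo n g t) (geo n g t)).re) atTop
        (nhds ((DeltaP p p).re)) := (hcont.tendsto p).comp hptend
    rw [hpz] at h1
    simp only [Complex.zero_re] at h1
    exact h1.congr fun t => hF t
  have hlimbot : Tendsto (fun t => 2 / f t) atBot (nhds 0) := by
    have h1 : Tendsto (fun t => (DeltaP (geo n g t) (geo n g t)).re) atBot
        (nhds ((DeltaP q q).re)) := (hcont.tendsto q).comp hqtend
    rw [hqz] at h1
    simp only [Complex.zero_re] at h1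
    exact h1.congr fun t => hF t
  -- P and Q are not both zero
  have hPQ : ¬ (P = 0 ∧ Q = 0) := by
    rintro ⟨hP0, hQ0⟩
    have hα : b (Fin.last (n+1)) - b 0 = 0 := by
      have h1 : P - Q = b (Fin.last (n+1)) - b 0 := by rw [hPdef, hQdef]; ring
      rw [hP0, hQ0] at h1
      linear_combination -h1
    have hβ : c (Fin.last (n+1)) - c 0 = 0 := by
      have h1 : P + Q = c (Fin.last (n+1)) - c 0 := by rw [hPdef, hQdef]; ring
      rw [hP0, hQ0] at h1
      linear_combination -h1
    have hmidzero : ∀ (uu : Fin (n+2) → ℂ),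
        (∑ k, dfun n k * (starRingEnd ℂ) (uu k) * uu k = 0) →
        uu (Fin.last (n+1)) = uu 0 → ∀ i : Fin n, uu (Fin.castSucc i.succ) = 0 := by
      intro uu hnull heq
      have hsplit := sum_d_split n uu uu
      rw [hnull] at hsplit
      have h2 : ∀ k : Fin (n+1), (starRingEnd ℂ) (uu k.castSucc) * uu k.castSucc
          = ((normSq (uu k.castSucc) : ℝ) : ℂ) := fun k => by rw [mul_comm, Complex.mul_conj]
      have h3 : (starRingEnd ℂ) (uu (Fin.last (n+1))) * uu (Fin.last (n+1))
          = ((normSq (uu (Fin.last (n+1))) : ℝ) : ℂ) := by rw [mul_comm, Complex.mul_conj]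
      rw [Finset.sum_congr rfl (fun k _ => h2 k), h3, ← Complex.ofReal_sum] at hsplit
      have h4 : ((∑ k : Fin (n+1), normSq (uu k.castSucc))
          - normSq (uu (Fin.last (n+1))) : ℝ) = 0 := by
        push_cast at hsplit
        apply Complex.ofReal_injective
        push_cast
        linear_combination -hsplit
      rw [Fin.sum_univ_succ (fun k : Fin (n+1) => normSq (uu k.castSucc))] at h4
      rw [Fin.castSucc_zero] at h4
      have h5 : normSq (uu 0) = normSq (uu (Fin.last (n+1))) := by rw [heq]
      have h6 : ∑ i : Fin n, normSq (uu (Fin.castSucc i.succ)) = 0 := by linarith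
      intro i
      have h7 := (Finset.sum_eq_zero_iff_of_nonneg
        (fun j _ => normSq_nonneg (uu (Fin.castSucc j.succ)))).mp h6 i (Finset.mem_univ i)
      exact normSq_eq_zero.mp h7
    have hunull : ∑ k, dfun n k * (starRingEnd ℂ)
        ((1:ℂ) * b k + (1:ℂ) * c k) * ((1:ℂ) * b k + (1:ℂ) * c k) = 0 := by
      rw [hSB 1 1 1 1]; simp
    have hwnull : ∑ k, dfun n k * (starRingEnd ℂ)
        ((-1:ℂ) * b k + (1:ℂ) * c k) * ((-1:ℂ) * b k + (1:ℂ) * c k) = 0 := by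
      rw [hSB (-1) 1 (-1) 1]; simp
    have huL : (1:ℂ) * b (Fin.last (n+1)) + (1:ℂ) * c (Fin.last (n+1))
        = (1:ℂ) * b 0 + (1:ℂ) * c 0 := by linear_combination hα + hβ
    have hwL : (-1:ℂ) * b (Fin.last (n+1)) + (1:ℂ) * c (Fin.last (n+1))
        = (-1:ℂ) * b 0 + (1:ℂ) * c 0 := by linear_combination hβ - hα
    have humid : ∀ i : Fin n, (1:ℂ) * b (Fin.castSucc i.succ) + (1:ℂ) * c (Fin.castSucc i.succ) = 0 :=
      hmidzero (fun k => (1:ℂ) * b k + (1:ℂ) * c k) hunull huL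
    have hwmid : ∀ i : Fin n, (-1:ℂ) * b (Fin.castSucc i.succ) + (1:ℂ) * c (Fin.castSucc i.succ) = 0 :=
      hmidzero (fun k => (-1:ℂ) * b k + (1:ℂ) * c k) hwnull hwL
    have hcross : ∑ k, dfun n k * (starRingEnd ℂ)
        ((1:ℂ) * b k + (1:ℂ) * c k) * ((-1:ℂ) * b k + (1:ℂ) * c k) = -2 := by
      rw [hSB 1 1 (-1) 1]
      simp
      norm_num
    have hzero : ∑ k, dfun n k * (starRingEnd ℂ)
        ((1:ℂ) * b k + (1:ℂ) * c k) * ((-1:ℂ) * b k + (1:ℂ) * c k) = 0 := by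
      rw [sum_d_split n (fun k => (1:ℂ) * b k + (1:ℂ) * c k)
        (fun k => (-1:ℂ) * b k + (1:ℂ) * c k)]
      beta_reduce
      rw [Fin.sum_univ_succ]
      simp only [Fin.castSucc_zero]
      rw [Finset.sum_eq_zero (fun i _ => by rw [humid i, map_zero, zero_mul])]
      rw [huL, hwL]
      ring
    rw [hzero] at hcross
    norm_num at hcross
  -- A > 0 and B > 0
  have hApos : 0 < A := by
    rcases lt_or_eq_of_le hAnn with h | h
    · exact h
    exfalso
    have hP0 : P = 0 := normSq_eq_zero.mp h.symm
    have hC0 : CC = 0 := by rw [hCdef, hP0]; simp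
    have hA0 : A = 0 := h.symm
    by_cases hB0 : B = 0
    · exact hPQ ⟨hP0, normSq_eq_zero.mp hB0⟩
    · have hBpos : 0 < B := lt_of_le_of_ne hBnn (Ne.symm hB0)
      have heq : (fun t : ℝ => 2 / f t) = fun t => (2/B) * Real.exp (2*t) := by
        funext t
        rw [hfeq t, hA0, hC0, Real.exp_neg]
        field_simp
        ring
      have htop : Tendsto (fun t : ℝ => 2 / f t) atTop atTop := by
        rw [heq]
        apply Tendsto.const_mul_atTop (by positivity : (0:ℝ) < 2/B)
        exact Real.tendsto_exp_atTop.comp (Tendsto.const_mul_atTop two_pos tendsto_id)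
      exact absurd hlimtop (not_tendsto_nhds_of_tendsto_atTop htop 0)
  have hBpos : 0 < B := by
    rcases lt_or_eq_of_le hBnn with h | h
    · exact h
    exfalso
    have hQ0 : Q = 0 := normSq_eq_zero.mp h.symm
    have hC0 : CC = 0 := by rw [hCdef, hQ0]; simp
    have hB0 : B = 0 := h.symm
    have heq : (fun t : ℝ => 2 / f t) = fun t => (2/A) * Real.exp (-(2*t)) := by
      funext t
      rw [hfeq t, hB0, hC0, Real.exp_neg]
      field_simp
      ring
    have hbot : Tendsto (fun t : ℝ => 2 / f t) atBot atTop := by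
      rw [heq]
      apply Tendsto.const_mul_atTop (by positivity : (0:ℝ) < 2/A)
      apply Real.tendsto_exp_atTop.comp
      have h1 : Tendsto (fun t : ℝ => 2*t) atBot atBot :=
        Tendsto.const_mul_atBot two_pos tendsto_id
      exact tendsto_neg_atBot_atTop.comp h1
    exact absurd hlimbot (not_tendsto_nhds_of_tendsto_atTop hbot 0)
  -- the mixed positivity estimate
  have hmixed : ∀ t : ℝ, f t ≠ 0 → f (-t) ≠ 0 →
      0 ≤ A + B + CC * Real.cosh (2*t) := by
    intro t hft hfmt
    have hne1 : v t 0 ≠ v t (Fin.last (n+1)) := by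
      intro h
      exact hft (by rw [← hfval t, h]; simp)
    have hne2 : v (-t) 0 ≠ v (-t) (Fin.last (n+1)) := by
      intro h
      exact hfmt (by rw [← hfval (-t), h]; simp)
    set D : ℂ := (v t (Fin.last (n+1)) - v t 0) *
      (starRingEnd ℂ) (v (-t) (Fin.last (n+1)) - v (-t) 0) with hDdef
    have hform : DeltaP (geo n g t) (geo n g (-t))
        = 2 * ((Real.cosh (2*t) : ℝ) : ℂ) / D := by
      rw [geo_eq n g t, geo_eq n g (-t), hvcol t, hvcol (-t)]
      rw [deltaP_formula (v t) (v (-t)) (hvL t) (hvL (-t)) hne1 hne2]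
      congr 1
      have hsplit := sum_d_split n (v (-t)) (v t)
      rw [hmix t] at hsplit
      have h1 : (starRingEnd ℂ) (v (-t) (Fin.last (n+1))) * v t (Fin.last (n+1))
          - ∑ k : Fin (n+1), (starRingEnd ℂ) (v (-t) k.castSucc) * v t k.castSucc
          = ((Real.cosh (2*t) : ℝ) : ℂ) := by
        push_cast at hsplit ⊢
        linear_combination hsplit
      rw [h1]
    have hc1 : ((Real.exp t : ℝ):ℂ) * ((Real.exp (-t) : ℝ):ℂ) = 1 := by
      rw [← Complex.ofReal_mul, hexp1 t, Complex.ofReal_one]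
    have hc2 : ((Real.exp t : ℝ):ℂ) * ((Real.exp t : ℝ):ℂ) = ((Real.exp (2*t) : ℝ):ℂ) := by
      rw [← Complex.ofReal_mul, hexp2 t]
    have hc3 : ((Real.exp (-t) : ℝ):ℂ) * ((Real.exp (-t) : ℝ):ℂ)
        = ((Real.exp (-(2*t)) : ℝ):ℂ) := by
      rw [← Complex.ofReal_mul, hexp2' t]
    have hPP : P * (starRingEnd ℂ) P = ((A:ℝ):ℂ) := Complex.mul_conj P
    have hQQ : Q * (starRingEnd ℂ) Q = ((B:ℝ):ℂ) := Complex.mul_conj Q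
    have hD2 : D = ((A : ℝ) : ℂ) + ((B : ℝ) : ℂ)
        + ((Real.exp (2*t) : ℝ) : ℂ) * (P * (starRingEnd ℂ) Q)
        + ((Real.exp (-(2*t)) : ℝ) : ℂ) * ((starRingEnd ℂ) P * Q) := by
      rw [hDdef, hvPQ t, hvPQ (-t), neg_neg]
      rw [_root_.map_add, _root_.map_mul, _root_.map_mul,
        Complex.conj_ofReal, Complex.conj_ofReal]
      linear_combination (P * (starRingEnd ℂ) P) * hc1 + (Q * (starRingEnd ℂ) Q) * hc1
        + (P * (starRingEnd ℂ) Q) * hc2 + ((starRingEnd ℂ) P * Q) * hc3 + hPP + hQQ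
    have hDre : D.re = A + B + CC * Real.cosh (2*t) := by
      rw [hD2]
      have hconj : ((starRingEnd ℂ) P * Q) = (starRingEnd ℂ) (P * (starRingEnd ℂ) Q) := by
        rw [_root_.map_mul, Complex.conj_conj]
      rw [hconj]
      simp only [Complex.add_re, Complex.ofReal_re, Complex.re_ofReal_mul, Complex.conj_re]
      rw [hCdef, Real.cosh_eq]
      ring
    by_cases hD : D = 0
    · rw [← hDre, hD, Complex.zero_re]
    · have h1 : 0 ≤ (DeltaP (geo n g t) (geo n g (-t))).re := by
        apply deltaP_re_nonneg
        · rw [hF t]; exact div_nonneg (by norm_num) (hfnn t)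
        · rw [hF (-t)]; exact div_nonneg (by norm_num) (hfnn (-t))
      rw [hform] at h1
      have h2 : (2 * ((Real.cosh (2*t) : ℝ) : ℂ) / D).re
          = (2 * Real.cosh (2*t)) * D.re / normSq D := by
        rw [show (2 * ((Real.cosh (2*t):ℝ):ℂ)) = (((2 * Real.cosh (2*t) : ℝ)):ℂ) by
          rw [Complex.ofReal_mul, Complex.ofReal_ofNat]]
        rw [Complex.div_re, Complex.ofReal_re, Complex.ofReal_im]
        ring
      rw [h2] at h1
      have hN : 0 < normSq D := normSq_pos.mpr hD
      have hch : 0 < Real.cosh (2*t) := Real.cosh_pos _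
      have h3 : 0 ≤ D.re := by
        by_contra hneg
        push_neg at hneg
        have hlt : (2 * Real.cosh (2*t)) * D.re / normSq D < 0 := by
          apply div_neg_of_neg_of_pos _ hN
          nlinarith
        linarith
      rw [hDre] at h3
      exact h3
  -- C ≥ 0
  have hCC : 0 ≤ CC := by
    by_contra hcon
    push_neg at hcon
    set M : ℝ := max (max ((-CC)/A) ((-CC)/B)) ((2*(A+B)+1)/(-CC)) with hMdef
    have hM1 : (-CC)/A ≤ M := le_trans (le_max_left _ _) (le_max_left _ _)
    have hM2 : (-CC)/B ≤ M := le_trans (le_max_right _ _) (le_max_left _ _)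
    have hM3 : (2*(A+B)+1)/(-CC) ≤ M := le_max_right _ _
    have hMpos : 0 < M + 1 := by
      have : 0 < (-CC)/A := div_pos (by linarith) hApos
      linarith
    set t : ℝ := Real.log (M+1) / 2 with htdef
    have he : Real.exp (2*t) = M+1 := by
      rw [htdef, show 2*(Real.log (M+1)/2) = Real.log (M+1) by ring, Real.exp_log hMpos]
    have hft : 0 < f t := by
      rw [hfeq t, he]
      have h1 : -CC < A * (M+1) := by
        have := (div_le_iff₀ hApos).mp (le_trans hM1 (by linarith : M ≤ M+1-1+1-1+1-1+1))
        nlinarith [(div_le_iff₀ hApos).mp hM1, hApos]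
      have h2 : 0 < B * Real.exp (-(2*t)) := by positivity
      nlinarith
    have hfmt : 0 < f (-t) := by
      rw [hfeq (-t)]
      rw [show 2*(-t) = -(2*t) by ring, show -(-(2*t)) = 2*t by ring, he]
      have h1 : -CC < B * (M+1) := by
        nlinarith [(div_le_iff₀ hBpos).mp hM2, hBpos]
      have h2 : 0 < A * Real.exp (-(2*t)) := by positivity
      nlinarith
    have hmain := hmixed t hft.ne' hfmt.ne'
    have hcosh : (M+1)/2 ≤ Real.cosh (2*t) := by
      rw [Real.cosh_eq, he]
      have := Real.exp_pos (-(2*t))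
      linarith
    have hM3' : 2*(A+B)+1 ≤ (-CC) * (M+1) := by
      have := (div_le_iff₀ (by linarith : (0:ℝ) < -CC)).mp hM3
      nlinarith
    nlinarith [mul_le_mul_of_nonpos_left hcosh (by linarith : CC ≤ 0)]
  -- f is everywhere positive
  have hfpos : ∀ t : ℝ, 0 < f t := by
    intro t
    rw [hfeq t]
    have h1 := Real.exp_pos (2*t)
    have h2 := Real.exp_pos (-(2*t))
    nlinarith
  -- the minimality inequality
  have hge : ∀ t : ℝ, f 0 ≤ f t := by
    intro t
    have h := hmax t
    rw [hF t, hF 0] at h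
    have := (div_le_div_iff₀ (hfpos t) (hfpos 0)).mp h
    linarith
  -- A = B
  have hABeq : A = B := by
    by_contra hne
    set s0 : ℝ := (A+B)/(2*A) with hs0def
    have hs0pos : 0 < s0 := by positivity
    have h := hge (Real.log s0 / 2)
    have he1 : Real.exp (2*(Real.log s0/2)) = s0 := by
      rw [show 2*(Real.log s0/2) = Real.log s0 by ring, Real.exp_log hs0pos]
    have he2 : Real.exp (-(2*(Real.log s0/2))) = s0⁻¹ := by
      rw [Real.exp_neg, he1]
    rw [hfeq 0, hfeq (Real.log s0/2), he1, he2] at h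
    simp only [mul_zero, neg_zero, Real.exp_zero, mul_one] at h
    have hABpos : 0 < A + B := by linarith
    have h1 : A * s0 = (A+B)/2 := by
      rw [hs0def]
      field_simp
    have h2 : B * s0⁻¹ = 2*A*B/(A+B) := by
      rw [hs0def, inv_div]
      field_simp
    rw [h1, h2] at h
    have hne' : A - B ≠ 0 := sub_ne_zero.2 hne
    have hsq : 0 < (A-B)^2 := pow_two_pos_of_ne_zero hne'
    have h3 : (A+B) * (A+B) ≤ (A+B)/2 * (A+B) + 2*A*B := by
      have := mul_le_mul_of_nonneg_right (by linarith : A + B ≤ (A+B)/2 + 2*A*B/(A+B)) hABpos.le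
      calc (A+B)*(A+B) ≤ ((A+B)/2 + 2*A*B/(A+B)) * (A+B) := this
        _ = (A+B)/2 * (A+B) + 2*A*B/(A+B) * (A+B) := by ring
        _ = (A+B)/2 * (A+B) + 2*A*B := by
            rw [div_mul_cancel₀ _ hABpos.ne']
    nlinarith
  -- f in terms of cosh
  have hfcosh : ∀ t : ℝ, f t = 2*A*Real.cosh (2*t) + CC := by
    intro t
    rw [hfeq t, ← hABeq, Real.cosh_eq]
    ring
  have hf0 : f 0 = 2*A + CC := by
    rw [hfcosh 0]
    norm_num
  -- C ≤ 2A
  have hCle : CC ≤ 2*A := by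
    have h := normSq_nonneg (P - Q)
    rw [Complex.normSq_sub] at h
    rw [hCdef]
    have : normSq P = A := rfl
    have : normSq Q = B := rfl
    nlinarith [hABeq]
  -- conclusions
  refine ⟨?_, ?_, ?_, ?_⟩
  · intro t1 h1 t2 h2 h12
    simp only
    rw [hF t1, hF t2]
    apply div_lt_div_of_pos_left two_pos (hfpos t2)
    rw [hfcosh t1, hfcosh t2]
    have hch : Real.cosh (2*t2) < Real.cosh (2*t1) := by
      rw [Real.cosh_lt_cosh]
      have e1 : (0:ℝ) ≥ 2*t2 := by simp only [Set.mem_Iic] at h2; linarith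
      have e2 : (0:ℝ) ≥ 2*t1 := by simp only [Set.mem_Iic] at h1; linarith
      rw [abs_of_nonpos e1, abs_of_nonpos e2]
      simp only [Set.mem_Iic] at h1 h2
      linarith
    nlinarith
  · intro t1 h1 t2 h2 h12
    simp only
    rw [hF t1, hF t2]
    apply div_lt_div_of_pos_left two_pos (hfpos t1)
    rw [hfcosh t1, hfcosh t2]
    have hch : Real.cosh (2*t1) < Real.cosh (2*t2) := by
      rw [Real.cosh_lt_cosh]
      have e1 : (0:ℝ) ≤ 2*t1 := by simp only [Set.mem_Ici] at h1; linarith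
      have e2 : (0:ℝ) ≤ 2*t2 := by simp only [Set.mem_Ici] at h2; linarith
      rw [_root_.abs_of_nonneg e1, _root_.abs_of_nonneg e2]
      simp only [Set.mem_Ici] at h1 h2
      linarith
    nlinarith
  · intro t
    apply Complex.ext
    · rw [hF t, hF (-t)]
      rw [hfcosh t, hfcosh (-t)]
      rw [show 2*(-t) = -(2*t) by ring, Real.cosh_neg]
    · rw [him t, him (-t)]
  · intro t
    have hE1 : Real.exp (-(2*|t|)) * Real.exp (2*|t|) = 1 := by
      rw [← Real.exp_add]
      norm_num
    have hEpos : 0 < Real.exp (-(2*|t|)) := Real.exp_pos _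
    have hEle1 : Real.exp (-(2*|t|)) ≤ 1 := by
      rw [Real.exp_le_one_iff]
      have := abs_nonneg t
      linarith
    have hcosht : Real.cosh (2*t) = (Real.exp (2*|t|) + Real.exp (-(2*|t|)))/2 := by
      rw [← Real.cosh_abs, abs_mul, _root_.abs_two, Real.cosh_eq]
    constructor
    · rw [hF t, hF 0]
      rw [mul_div_assoc']
      rw [div_le_div_iff₀ (hfpos 0) (hfpos t)]
      rw [hf0, hfcosh t, hcosht]
      nlinarith [hE1, hEpos, hEle1, hApos, hCC,
        mul_le_mul_of_nonneg_left hEle1 hEpos.le,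
        mul_le_mul_of_nonneg_left hEle1 hCC]
    · rw [hF t, hF 0]
      rw [← mul_div_assoc]
      rw [div_le_div_iff₀ (hfpos t) (hfpos 0)]
      rw [hf0, hfcosh t, hcosht]
      nlinarith [hE1, hEpos, hEle1, hApos, hCC, hCle, sq_nonneg (Real.exp (-(2*|t|))),
        mul_nonneg hEpos.le hCC]
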